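/- Let G be a graph, F a minimal chordal completion of G (a set of nonedges whose addition makes G chordal, minimal under inclusion), and Γ a potential segment in G that F respects. Then for each component D of G − Γ: (1) D is still a connected component of (G+F) − Γ; (2) N_G(D) is a minimal separator in G+F with D a full component; and (3) F contains every closure edge of Γ, i.e., for each component D of G − Γ, the set N_G(D) is a clique in G+F. -/

import Mathlib

open SimpleGraph

variable {V : Type*}

/-- `D` is (the vertex set of) a connected component of `G - S`. -/
def IsCompOf (G : SimpleGraph V) (S D : Set V) : Prop :=
  D.Nonempty ∧ Disjoint D S ∧ (G.induce D).Connected ∧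
    ∀ v ∈ D, ∀ w : V, G.Adj v w → w ∉ S → w ∈ D

/-- The open neighborhood `N(D)` of a vertex set `D`. -/
def nbhd (G : SimpleGraph V) (D : Set V) : Set V :=
  {v | v ∉ D ∧ ∃ d ∈ D, G.Adj v d}

/-- The closed neighborhood `N[D]` of a vertex set `D`. -/
def closedNbhd (G : SimpleGraph V) (D : Set V) : Set V :=
  D ∪ nbhd G D

/-- `D` is full to `S`: every vertex of `S` has a neighbor in `D`. -/
def FullTo (G : SimpleGraph V) (S D : Set V) : Prop :=
  ∀ s ∈ S, ∃ d ∈ D, G.Adj s d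

/-- `S` is a minimal separator: `G - S` has at least two components full to `S`. -/
def IsMinSep (G : SimpleGraph V) (S : Set V) : Prop :=
  ∃ D₁ D₂ : Set V, IsCompOf G S D₁ ∧ IsCompOf G S D₂ ∧ D₁ ≠ D₂ ∧
    FullTo G S D₁ ∧ FullTo G S D₂

/-- A graph is chordal if it has no induced cycle of length at least 4. -/
def IsChordal (G : SimpleGraph V) : Prop :=
  ∀ n : ℕ, 4 ≤ n → IsEmpty (cycleGraph n ↪g G)

/-- `H` is a minimal chordal completion of `G` (i.e. `H = G + F` for a minimal chordal
fill-in `F`). -/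
def IsMinChordalCompletion (G H : SimpleGraph V) : Prop :=
  G ≤ H ∧ IsChordal H ∧ ∀ H' : SimpleGraph V, G ≤ H' → H' ≤ H → IsChordal H' → H' = H

/-- `Γ` is a potential segment of `G`. -/
def IsPotentialSegment (G : SimpleGraph V) (Γ : Set V) : Prop :=
  ∀ D : Set V, IsCompOf G Γ D → IsMinSep G (nbhd G D)

/-- The completion `H` of `G` respects the potential segment `Γ`: every fill edge with
one endpoint in a component `D` of `G - Γ` has its other endpoint in `N_G[D]`. -/
def Respects (G H : SimpleGraph V) (Γ : Set V) : Prop :=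
  ∀ D : Set V, IsCompOf G Γ D →
    ∀ u ∈ D, ∀ v : V, H.Adj u v → ¬ G.Adj u v → v ∈ closedNbhd G D

/-! ### Auxiliary machinery -/

/-- Restriction of a graph to a vertex set (as a graph on `V`). -/
def restrict (K : SimpleGraph V) (T : Set V) : SimpleGraph V where
  Adj a b := K.Adj a b ∧ a ∈ T ∧ b ∈ T
  symm := ⟨fun _ _ ⟨h, ha, hb⟩ => ⟨h.symm, hb, ha⟩⟩
  loopless := ⟨fun a ⟨h, _, _⟩ => K.loopless.irrefl a h⟩

lemma restrict_walk_mem {K : SimpleGraph V} {T : Set V} {x y : V}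
    (p : (restrict K T).Walk x y) (hx : x ∈ T) : ∀ k, p.getVert k ∈ T := by
  induction p with
  | nil => intro k; simpa using hx
  | cons h q ih =>
    intro k
    cases k with
    | zero => simpa using hx
    | succ k => exact (q.getVert_cons_succ h ▸ ih h.2.2 k)

lemma getVert_mem_support {K : SimpleGraph V} {x y : V} (p : K.Walk x y) (k : ℕ) :
    p.getVert k ∈ p.support := by
  induction p generalizing k with
  | nil => simp [SimpleGraph.Walk.getVert]
  | cons h q ih =>
    cases k with
    | zero => simp [SimpleGraph.Walk.getVert]
    | succ k =>
      rw [SimpleGraph.Walk.getVert_cons_succ]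
      simp [ih k]

lemma IsPath_getVert_inj {K : SimpleGraph V} {x y : V} {p : K.Walk x y}
    (hp : p.IsPath) : ∀ {i j : ℕ}, i ≤ p.length → j ≤ p.length →
    p.getVert i = p.getVert j → i = j := by
  induction p with
  | nil => intro i j hi hj _; simp at hi hj; omega
  | cons h q ih =>
    intro i j hi hj hij
    have hq := hp.of_cons
    have hx : _ ∉ q.support := (SimpleGraph.Walk.cons_isPath_iff _ _).1 hp |>.2
    cases i with
    | zero =>
      cases j with
      | zero => rfl
      | succ j =>
        exfalso
        rw [SimpleGraph.Walk.getVert_zero, SimpleGraph.Walk.getVert_cons_succ] at hij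
        exact hx (hij ▸ getVert_mem_support q j)
    | succ i =>
      cases j with
      | zero =>
        exfalso
        rw [SimpleGraph.Walk.getVert_zero, SimpleGraph.Walk.getVert_cons_succ] at hij
        exact hx (hij ▸ getVert_mem_support q i)
      | succ j =>
        rw [SimpleGraph.Walk.getVert_cons_succ, SimpleGraph.Walk.getVert_cons_succ] at hij
        simp only [SimpleGraph.Walk.length_cons] at hi hj
        exact congrArg Nat.succ (ih hq (by omega) (by omega) hij)

lemma length_drop {K : SimpleGraph V} {x y : V} (p : K.Walk x y) (n : ℕ) :
    (p.drop n).length = p.length - n := by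
  induction p generalizing n with
  | nil => simp [SimpleGraph.Walk.drop]
  | cons h q ih =>
    cases n with
    | zero => simp [SimpleGraph.Walk.drop]
    | succ n => simp [SimpleGraph.Walk.drop, ih n]

/-- A shortest walk is an induced path: nonconsecutive vertices are nonadjacent. -/
lemma shortest_not_adj {K : SimpleGraph V} {x y : V} (p : K.Walk x y)
    (hp : p.length = K.dist x y) : ∀ {i j : ℕ}, i + 2 ≤ j → j ≤ p.length →
    ¬ K.Adj (p.getVert i) (p.getVert j) := by
  induction p with
  | nil => intro i j hij hj _; simp at hj; omega
  | cons h q ih =>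
    rename_i u c w
    intro i j hij hj hadj
    simp only [SimpleGraph.Walk.length_cons] at hj hp
    have hreach : K.Reachable c w := q.reachable
    obtain ⟨q', hq'⟩ := hreach.exists_walk_length_eq_dist
    have h1 : K.dist u w ≤ (SimpleGraph.Walk.cons h q').length := SimpleGraph.dist_le _
    have h2 : K.dist c w ≤ q.length := SimpleGraph.dist_le _
    simp only [SimpleGraph.Walk.length_cons] at h1
    have hqdist : q.length = K.dist c w := by omega
    cases i with
    | zero =>
      rw [SimpleGraph.Walk.getVert_zero] at hadj
      rw [SimpleGraph.Walk.getVert_cons _ h (by omega)] at hadj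
      have hlen : (SimpleGraph.Walk.cons hadj (q.drop (j-1))).length
          = 1 + (q.length - (j-1)) := by
        simp [length_drop]; omega
      have := SimpleGraph.dist_le (SimpleGraph.Walk.cons hadj (q.drop (j-1)))
      rw [hlen] at this
      omega
    | succ i =>
      rw [SimpleGraph.Walk.getVert_cons_succ] at hadj
      rw [SimpleGraph.Walk.getVert_cons _ h (by omega)] at hadj
      exact ih hqdist (by omega : i + 2 ≤ j - 1) (by omega) hadj

/-- The component of `K - Γ` containing `v`. -/
def compo (K : SimpleGraph V) (Γ : Set V) (v : V) : Set V :=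
  {w | w ∉ Γ ∧ (restrict K Γᶜ).Reachable v w}

lemma walk_closed {K : SimpleGraph V} {Γ D : Set V}
    (hcl : ∀ u ∈ D, ∀ w : V, K.Adj u w → w ∉ Γ → w ∈ D) {a b : V}
    (p : (restrict K Γᶜ).Walk a b) (ha : a ∈ D) : b ∈ D := by
  induction p with
  | nil => exact ha
  | cons h q ih => exact ih (hcl _ ha _ h.1 h.2.2)

lemma induce_reach_restrict {K K' : SimpleGraph V} {D T : Set V}
    (hle : K ≤ K') (hDT : D ⊆ T) {a b : ↥D}
    (h : (K.induce D).Reachable a b) : (restrict K' T).Reachable a.val b.val := by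
  obtain ⟨p⟩ := h
  induction p with
  | nil => exact SimpleGraph.Reachable.refl _
  | cons hadj q ih =>
    rename_i x c w
    have : (restrict K' T).Adj x.val c.val := ⟨hle hadj, hDT x.2, hDT c.2⟩
    exact this.reachable.trans ih

lemma reach_induce_compo {K : SimpleGraph V} {Γ : Set V} {v : V} {a b : V}
    (p : (restrict K Γᶜ).Walk a b) (ha : a ∈ compo K Γ v) (hb : b ∈ compo K Γ v) :
    (K.induce (compo K Γ v)).Reachable ⟨a, ha⟩ ⟨b, hb⟩ := by
  induction p with
  | nil => rfl
  | cons h q ih =>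
    rename_i x c w
    have hc : c ∈ compo K Γ v := ⟨h.2.2, ha.2.trans (SimpleGraph.Adj.reachable h)⟩
    have hadj : (K.induce (compo K Γ v)).Adj ⟨x, ha⟩ ⟨c, hc⟩ := h.1
    exact hadj.reachable.trans (ih hc hb)

lemma compo_isCompOf {K : SimpleGraph V} {Γ : Set V} {v : V} (hv : v ∉ Γ) :
    IsCompOf K Γ (compo K Γ v) := by
  have hvmem : v ∈ compo K Γ v := ⟨hv, SimpleGraph.Reachable.refl v⟩
  refine ⟨⟨v, hvmem⟩, ?_, ?_, ?_⟩
  · rw [Set.disjoint_left]; exact fun a ha => ha.1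
  · haveI : Nonempty ↥(compo K Γ v) := ⟨⟨v, hvmem⟩⟩
    refine ⟨?_⟩
    rintro ⟨a, ha⟩ ⟨b, hb⟩
    obtain ⟨p⟩ := (ha.2.symm.trans hb.2)
    exact reach_induce_compo p ha hb
  · intro u hu w hadj hw
    exact ⟨hw, hu.2.trans (SimpleGraph.Adj.reachable ⟨hadj, hu.1, hw⟩)⟩

lemma isCompOf_eq_compo {K : SimpleGraph V} {Γ D : Set V} {v : V}
    (hD : IsCompOf K Γ D) (hv : v ∈ D) : D = compo K Γ v := by
  obtain ⟨hne, hdisj, hconn, hcl⟩ := hD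
  have hDΓ : ∀ x ∈ D, x ∉ Γ := fun x hx => Set.disjoint_left.mp hdisj hx
  apply Set.eq_of_subset_of_subset
  · intro w hw
    have hr : (restrict K Γᶜ).Reachable v w :=
      induce_reach_restrict le_rfl (fun x hx => hDΓ x hx)
        (hconn.preconnected ⟨v, hv⟩ ⟨w, hw⟩)
    exact ⟨hDΓ w hw, hr⟩
  · rintro w ⟨hw, hr⟩
    obtain ⟨p⟩ := hr
    exact walk_closed hcl p hv

lemma isCompOf_unique {K : SimpleGraph V} {Γ D₁ D₂ : Set V}
    (h1 : IsCompOf K Γ D₁) (h2 : IsCompOf K Γ D₂) {v : V} (hv1 : v ∈ D₁)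
    (hv2 : v ∈ D₂) : D₁ = D₂ := by
  rw [isCompOf_eq_compo h1 hv1, isCompOf_eq_compo h2 hv2]

lemma cycle_adj_iff {n : ℕ} (hn : 4 ≤ n) (i j : Fin n) :
    (cycleGraph n).Adj i j ↔
      (j.val = i.val + 1 ∨ i.val = j.val + 1 ∨ (i.val = 0 ∧ j.val = n - 1) ∨
        (j.val = 0 ∧ i.val = n - 1)) := by
  rw [SimpleGraph.cycleGraph_adj']
  have hi := i.isLt
  have hj := j.isLt
  have h1 := Fin.coe_int_sub_eq_ite i j
  have h2 := Fin.coe_int_sub_eq_ite j i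
  have e1 : (i : ℤ) = (i.val : ℤ) := rfl
  have e2 : (j : ℤ) = (j.val : ℤ) := rfl
  rw [e1, e2] at h1 h2
  simp only [Fin.le_def] at h1 h2
  constructor
  · rintro (h | h)
    · have : ((i - j : Fin n) : ℤ) = 1 := by exact_mod_cast congrArg (Nat.cast : ℕ → ℤ) h
      rw [h1] at this; split at this <;> omega
    · have : ((j - i : Fin n) : ℤ) = 1 := by exact_mod_cast congrArg (Nat.cast : ℕ → ℤ) h
      rw [h2] at this; split at this <;> omega
  · intro h
    rcases h with h | h | h | h
    · right
      have : ((j - i : Fin n) : ℤ) = 1 := by rw [h2]; split <;> omega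
      exact_mod_cast this
    · left
      have : ((i - j : Fin n) : ℤ) = 1 := by rw [h1]; split <;> omega
      exact_mod_cast this
    · left
      have : ((i - j : Fin n) : ℤ) = 1 := by rw [h1]; split <;> omega
      exact_mod_cast this
    · right
      have : ((j - i : Fin n) : ℤ) = 1 := by rw [h2]; split <;> omega
      exact_mod_cast this

/-- Through a full component one can find an induced path of length `≥ 2` between two
nonadjacent vertices of `S`, with all interior vertices in the component. -/
lemma side_path {H : SimpleGraph V} {S D : Set V} (hD : IsCompOf H S D)
    (hf : FullTo H S D) {x y : V} (hx : x ∈ S) (hy : y ∈ S) (hxy : x ≠ y)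
    (hnadj : ¬ H.Adj x y) :
    ∃ (c : ℕ → V) (a : ℕ), 2 ≤ a ∧ c 0 = x ∧ c a = y ∧
      (∀ k, k < a → H.Adj (c k) (c (k + 1))) ∧
      (∀ k, 0 < k → k < a → c k ∈ D) ∧
      (∀ i j, i ≤ a → j ≤ a → c i = c j → i = j) ∧
      (∀ i j, i + 2 ≤ j → j ≤ a → ¬ H.Adj (c i) (c j)) := by
  obtain ⟨hne, hdisj, hconn, hcl⟩ := hD
  set T : Set V := D ∪ {x, y} with hT
  have hxT : x ∈ T := by simp [hT]
  have hyT : y ∈ T := by simp [hT]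
  obtain ⟨d, hd, hxd⟩ := hf x hx
  obtain ⟨e, he, hye⟩ := hf y hy
  have hreach : (restrict H T).Reachable x y := by
    have r1 : (restrict H T).Adj x d := ⟨hxd, hxT, Or.inl hd⟩
    have r2 : (restrict H T).Reachable d e :=
      induce_reach_restrict le_rfl (fun z hz => Or.inl hz)
        (hconn.preconnected ⟨d, hd⟩ ⟨e, he⟩)
    have r3 : (restrict H T).Adj e y := ⟨hye.symm, Or.inl he, hyT⟩
    exact (r1.reachable.trans r2).trans r3.reachable
  obtain ⟨p, hplen⟩ := hreach.exists_walk_length_eq_dist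
  have hpath : p.IsPath := p.isPath_of_length_eq_dist hplen
  have hmem : ∀ k, p.getVert k ∈ T := restrict_walk_mem p hxT
  have hinj : ∀ i j, i ≤ p.length → j ≤ p.length → p.getVert i = p.getVert j → i = j :=
    fun i j hi hj => IsPath_getVert_inj hpath hi hj
  have hlen0 : p.getVert 0 = x := p.getVert_zero
  have hlenL : p.getVert p.length = y := p.getVert_length
  have ha2 : 2 ≤ p.length := by
    rcases Nat.lt_or_ge p.length 2 with h | h
    · exfalso
      rcases (by omega : p.length = 0 ∨ p.length = 1) with h1 | h1
      · have hg0 : p.getVert 0 = y := by rw [← h1]; exact hlenL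
        exact hxy (by rw [← hlen0]; exact hg0)
      · have hA := (p.adj_getVert_succ (by omega : 0 < p.length)).1
        have hg1 : p.getVert 1 = y := by rw [← h1]; exact hlenL
        rw [hlen0, hg1] at hA
        exact hnadj hA
    · exact h
  refine ⟨fun k => p.getVert k, p.length, ha2, hlen0, hlenL, ?_, ?_, hinj, ?_⟩
  · intro k hk; exact (p.adj_getVert_succ hk).1
  · intro k h0 hk
    rcases hmem k with h | h
    · exact h
    · exfalso
      rcases h with h | h
      · exact absurd (hinj k 0 (le_of_lt hk) (by omega)
          (by rw [hlen0]; exact h)) (by omega)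
      · exact absurd (hinj k p.length (le_of_lt hk) le_rfl
          (by rw [hlenL]; exact h)) (by omega)
  · intro i j hij hj hadj
    exact shortest_not_adj p hplen hij hj ⟨hadj, hmem i, hmem j⟩

/-- In a chordal graph, every minimal separator is a clique. -/
lemma chordal_clique_of_minsep {H : SimpleGraph V} (hch : IsChordal H)
    {S : Set V} (hS : IsMinSep H S) : H.IsClique S := by
  obtain ⟨D₁, D₂, hD₁, hD₂, hne, hf₁, hf₂⟩ := hS
  rw [SimpleGraph.isClique_iff]
  intro x hx y hy hxy
  by_contra hnadj
  have hdisj12 : ∀ u, u ∈ D₁ → u ∈ D₂ → False := fun u h1 h2 =>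
    hne (isCompOf_unique hD₁ hD₂ h1 h2)
  have hnoedge : ∀ u ∈ D₁, ∀ w ∈ D₂, ¬ H.Adj u w := by
    intro u hu w hw hA
    exact hdisj12 w (hD₁.2.2.2 u hu w hA
      (fun hwS => Set.disjoint_left.mp hD₂.2.1 hw hwS)) hw
  obtain ⟨c₁, a, ha, hc10, hc1a, hadj1, hint1, hinj1, hch1⟩ :=
    side_path hD₁ hf₁ hx hy hxy hnadj
  obtain ⟨c₂, b, hb, hc20, hc2b, hadj2, hint2, hinj2, hch2⟩ :=
    side_path hD₂ hf₂ hx hy hxy hnadj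
  set n := a + b with hn
  have hn4 : 4 ≤ n := by omega
  set F : ℕ → V := fun k => if k ≤ a then c₁ k else c₂ (n - k) with hF
  have hFp : ∀ k, k ≤ a → F k = c₁ k := fun k hk => if_pos hk
  have hFq : ∀ k, a ≤ k → k ≤ n → F k = c₂ (n - k) := by
    intro k hk hk'
    rcases eq_or_lt_of_le hk with h | h
    · rw [hFp k h.symm.le, ← h, hc1a, show n - a = b by omega, hc2b]
    · exact if_neg (by omega)
  -- injectivity of F on [0, n)
  have hFinj : ∀ k l, k ≤ l → l < n → F k = F l → k = l := by
    intro k l hkl hln hFe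
    by_cases hla : l ≤ a
    · exact hinj1 k l (le_trans hkl hla) hla
        (by rwa [hFp k (le_trans hkl hla), hFp l hla] at hFe)
    · push_neg at hla
      by_cases hka : a ≤ k
      · have hFk : F k = c₂ (n - k) := hFq k hka (by omega)
        have hFl : F l = c₂ (n - l) := hFq l (by omega) (by omega)
        have := hinj2 (n - k) (n - l) (by omega) (by omega)
          (by rw [← hFk, ← hFl]; exact hFe)
        omega
      · push_neg at hka
        exfalso
        have hFl : F l = c₂ (n - l) := hFq l (by omega) (by omega)
        have hFlD : F l ∈ D₂ := by
          rw [hFl]; exact hint2 _ (by omega) (by omega)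
        rcases Nat.eq_zero_or_pos k with h0 | h0
        · have hco : c₂ (n - l) = c₂ 0 := by
            rw [← hFl, ← hFe, hFp k (by omega), h0, hc10, ← hc20]
          have := hinj2 (n - l) 0 (by omega) (by omega) hco
          omega
        · have hFkD : F k ∈ D₁ := by
            rw [hFp k (by omega)]; exact hint1 k h0 hka
          exact hdisj12 _ hFkD (hFe ▸ hFlD)
  -- consecutive adjacency
  have hconsec : ∀ k, k + 1 ≤ n → H.Adj (F k) (F (k + 1)) := by
    intro k hk
    by_cases hka : k + 1 ≤ a
    · rw [hFp k (by omega), hFp (k + 1) hka]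
      exact hadj1 k (by omega)
    · push_neg at hka
      rw [hFq k (by omega) (by omega), hFq (k + 1) (by omega) (by omega)]
      have h1 : n - k - 1 + 1 = n - k := by omega
      have := hadj2 (n - k - 1) (by omega)
      rw [h1] at this
      rw [show n - (k + 1) = n - k - 1 by omega]
      exact this.symm
  have hFn : F n = F 0 := by
    rw [hFq n (by omega) le_rfl, show n - n = 0 by omega, hc20, hFp 0 (by omega), hc10]
  -- no chords
  have hnochord : ∀ k l, k + 2 ≤ l → l < n → ¬(k = 0 ∧ l = n - 1) →
      ¬ H.Adj (F k) (F l) := by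
    intro k l hkl hln hex hA
    by_cases hla : l ≤ a
    · exact hch1 k l hkl hla (by rwa [hFp k (by omega), hFp l hla] at hA)
    · push_neg at hla
      by_cases hka : a ≤ k
      · have hFk : F k = c₂ (n - k) := hFq k hka (by omega)
        have hFl : F l = c₂ (n - l) := hFq l (by omega) (by omega)
        refine hch2 (n - l) (n - k) (by omega) (by omega) ?_
        rw [← hFk, ← hFl]
        exact hA.symm
      · push_neg at hka
        have hFl : F l = c₂ (n - l) := hFq l (by omega) (by omega)
        rcases Nat.eq_zero_or_pos k with h0 | h0
        · have hl2 : 2 ≤ n - l := by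
            rcases Nat.lt_or_ge l (n - 1) with h | h
            · omega
            · exact absurd ⟨h0, by omega⟩ hex
          refine hch2 0 (n - l) (by omega) (by omega) ?_
          rw [hc20, ← hc10, ← hFp 0 (by omega), ← h0, ← hFl]
          exact hA
        · have hFkD : F k ∈ D₁ := by
            rw [hFp k (by omega)]; exact hint1 k h0 hka
          have hFlD : F l ∈ D₂ := by
            rw [hFl]; exact hint2 _ (by omega) (by omega)
          exact hnoedge _ hFkD _ hFlD hA
  -- build the embedding
  have hemb : cycleGraph n ↪g H := by
    refine ⟨⟨fun i => F i.val, ?_⟩, ?_⟩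
    · intro i j hije
      rcases le_total i.val j.val with h | h
      · exact Fin.ext (hFinj _ _ h j.isLt hije)
      · exact (Fin.ext (hFinj _ _ h i.isLt hije.symm)).symm
    · intro i j
      show H.Adj (F i.val) (F j.val) ↔ (cycleGraph n).Adj i j
      rw [cycle_adj_iff hn4]
      constructor
      · intro hA
        by_contra hcyc
        push_neg at hcyc
        obtain ⟨h1, h2, h3, h4⟩ := hcyc
        rcases lt_trichotomy i.val j.val with h | h | h
        · exact hnochord i.val j.val (by omega) j.isLt
            (fun ⟨p1, p2⟩ => absurd p2 (h3 p1)) hA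
        · rw [h] at hA; exact H.loopless.irrefl _ hA
        · exact hnochord j.val i.val (by omega) i.isLt
            (fun ⟨p1, p2⟩ => absurd p2 (h4 p1)) hA.symm
      · intro hcyc
        rcases hcyc with h | h | h | h
        · rw [h]; exact hconsec i.val (by omega)
        · rw [h]; exact (hconsec j.val (by omega)).symm
        · rw [h.1, h.2]
          have := hconsec (n - 1) (by omega)
          rw [show n - 1 + 1 = n by omega, hFn] at this
          exact this.symm
        · rw [h.1, h.2]
          have := hconsec (n - 1) (by omega)
          rw [show n - 1 + 1 = n by omega, hFn] at this
          exact this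
  exact (hch n hn4).false hemb

lemma reach_mono_induce {K K' : SimpleGraph V} (hle : K ≤ K') {D : Set V} {a b : ↥D}
    (h : (K.induce D).Reachable a b) : (K'.induce D).Reachable a b := by
  obtain ⟨p⟩ := h
  induction p with
  | nil => exact SimpleGraph.Reachable.refl _
  | cons hadj q ih =>
    have : (K'.induce D).Adj _ _ := hle hadj
    exact this.reachable.trans ih

lemma induce_connected_mono {K K' : SimpleGraph V} (hle : K ≤ K') {D : Set V}
    (h : (K.induce D).Connected) : (K'.induce D).Connected := by
  haveI := h.nonempty
  exact ⟨fun a b => reach_mono_induce hle (h.preconnected a b)⟩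

lemma nbhd_subset {G : SimpleGraph V} {Γ D : Set V} (hD : IsCompOf G Γ D) :
    nbhd G D ⊆ Γ := by
  rintro w ⟨hwD, d, hd, hadj⟩
  by_contra hw
  exact hwD (hD.2.2.2 d hd w hadj.symm hw)

lemma comp_nbhd {G : SimpleGraph V} {Γ D : Set V} (hD : IsCompOf G Γ D) :
    IsCompOf G (nbhd G D) D := by
  obtain ⟨hne, hdisj, hconn, hcl⟩ := hD
  refine ⟨hne, ?_, hconn, ?_⟩
  · rw [Set.disjoint_left]; intro a ha h; exact h.1 ha
  · intro u hu w hadj hwS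
    by_contra hwD
    exact hwS ⟨hwD, u, hu, hadj.symm⟩

/-- Basic properties of a minimal chordal completion respecting a potential segment:
components of `G - Γ` coincide with those of `(G+F) - Γ`; for each such component `D`,
`N_G(D)` is still a minimal separator of `G+F` with `D` a full component; and every
closure edge of `Γ` lies in `F`, i.e. each `N_G(D)` is a clique of `G+F`. -/
theorem statement_18 [Fintype V] (G H : SimpleGraph V) (Γ : Set V)
    (hH : IsMinChordalCompletion G H) (hΓ : IsPotentialSegment G Γ)
    (hresp : Respects G H Γ) :
    (∀ D : Set V, IsCompOf G Γ D ↔ IsCompOf H Γ D) ∧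
    (∀ D : Set V, IsCompOf G Γ D →
      IsMinSep H (nbhd G D) ∧ IsCompOf H (nbhd G D) D ∧ FullTo H (nbhd G D) D ∧
      H.IsClique (nbhd G D)) := by
  obtain ⟨hle, hch, _⟩ := hH
  have fwd : ∀ D : Set V, IsCompOf G Γ D → IsCompOf H Γ D := by
    intro D hD
    obtain ⟨hne, hdisj, hconn, hcl⟩ := id hD
    refine ⟨hne, hdisj, induce_connected_mono hle hconn, ?_⟩
    intro v hv w hvw hwΓ
    by_cases hG : G.Adj v w
    · exact hcl v hv w hG hwΓ
    · rcases hresp D hD v hv w hvw hG with h | h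
      · exact h
      · exact absurd (nbhd_subset hD h) hwΓ
  have bwd : ∀ D : Set V, IsCompOf H Γ D → IsCompOf G Γ D := by
    intro D hD
    obtain ⟨v, hv⟩ := hD.1
    have hvΓ : v ∉ Γ := Set.disjoint_left.mp hD.2.1 hv
    have hGc : IsCompOf G Γ (compo G Γ v) := compo_isCompOf hvΓ
    have hHc : IsCompOf H Γ (compo G Γ v) := fwd _ hGc
    have hveq : v ∈ compo G Γ v := ⟨hvΓ, SimpleGraph.Reachable.refl v⟩
    have hDe : D = compo G Γ v := isCompOf_unique hD hHc hv hveq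
    rw [hDe]; exact hGc
  refine ⟨fun D => ⟨fwd D, bwd D⟩, ?_⟩
  intro D hD
  set S := nbhd G D with hS
  have hDcompG : IsCompOf G S D := comp_nbhd hD
  have hDcompH : IsCompOf H S D := by
    obtain ⟨hne, hdisj, hconn, hcl⟩ := id hD
    refine ⟨hne, hDcompG.2.1, induce_connected_mono hle hconn, ?_⟩
    intro u hu w hadj hwS
    by_cases hG : G.Adj u w
    · by_contra hwD
      exact hwS ⟨hwD, u, hu, hG.symm⟩
    · rcases hresp D hD u hu w hadj hG with h | h
      · exact h
      · exact absurd h hwS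
  have hfullH : FullTo H S D := by
    rintro s ⟨hsD, d, hd, hadj⟩
    exact ⟨d, hd, hle hadj⟩
  have hminsep : IsMinSep H S := by
    obtain ⟨D₁, D₂, h1, h2, h12, hf1, hf2⟩ := hΓ D hD
    have hchoice : ∃ E, IsCompOf G S E ∧ FullTo G S E ∧ E ≠ D := by
      by_cases h : D₁ = D
      · exact ⟨D₂, h2, hf2, fun he => h12 (h.trans he.symm)⟩
      · exact ⟨D₁, h1, hf1, h⟩
    obtain ⟨E, hE, hfE, hED⟩ := hchoice
    obtain ⟨v, hv⟩ := hE.1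
    have hvS : v ∉ S := Set.disjoint_left.mp hE.2.1 hv
    have hvD : v ∉ D := fun hvD => hED (isCompOf_unique hE hDcompG hv hvD)
    have hE' : IsCompOf H S (compo H S v) := compo_isCompOf hvS
    have hEE' : E ⊆ compo H S v := by
      intro w hw
      have hwS : w ∉ S := Set.disjoint_left.mp hE.2.1 hw
      exact ⟨hwS, induce_reach_restrict hle
        (fun z hz => Set.disjoint_left.mp hE.2.1 hz)
        (hE.2.2.1.preconnected ⟨v, hv⟩ ⟨w, hw⟩)⟩
    have hfE' : FullTo H S (compo H S v) := by
      intro s hs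
      obtain ⟨d, hd, hadj⟩ := hfE s hs
      exact ⟨d, hEE' hd, hle hadj⟩
    have hne' : D ≠ compo H S v := by
      intro h
      exact hvD (h ▸ (⟨hvS, SimpleGraph.Reachable.refl v⟩ : v ∈ compo H S v))
    exact ⟨D, compo H S v, hDcompH, hE', hne', hfullH, hfE'⟩
  exact ⟨hminsep, hDcompH, hfullH, chordal_clique_of_minsep hch hminsep⟩
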